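/- If x, y, z are symmetric 2×2 matrices over a commutative ring with det(x,y,z) = 0 (in the 3×3 determinant sense), then det(x, y, [x,y,z]) = 0 and [x, y, [x,y,z]] = det(x)·det(y)·z, where [a,b,c] = -a·J·c·J·b. -/
import Mathlib


open Matrix

def Jmat (A : Type*) [CommRing A] : Matrix (Fin 2) (Fin 2) A := !![0, 1; -1, 0]

def toMat {A : Type*} [CommRing A] (x : Fin 3 → A) : Matrix (Fin 2) (Fin 2) A :=
  !![x 0, x 1; x 1, x 2]

def ofMat {A : Type*} [CommRing A] (m : Matrix (Fin 2) (Fin 2) A) : Fin 3 → A :=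
  ![m 0 0, m 0 1, m 1 1]

def det3 {A : Type*} [CommRing A] (x y z : Fin 3 → A) : A :=
  (!![x 0, x 1, x 2; y 0, y 1, y 2; z 0, z 1, z 2]).det

lemma prodW {A : Type*} [CommRing A] (x y z : Fin 3 → A) :
    -(toMat x * Jmat A * toMat z * Jmat A * toMat y) =
      !![(x 0 * z 2 - x 1 * z 1) * y 0 + (x 1 * z 0 - x 0 * z 1) * y 1,
         (x 0 * z 2 - x 1 * z 1) * y 1 + (x 1 * z 0 - x 0 * z 1) * y 2;
         (x 1 * z 2 - x 2 * z 1) * y 0 + (x 2 * z 0 - x 1 * z 1) * y 1,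
         (x 1 * z 2 - x 2 * z 1) * y 1 + (x 2 * z 0 - x 1 * z 1) * y 2] := by
  ext i j
  fin_cases i <;> fin_cases j <;>
    simp [toMat, Jmat, Matrix.mul_apply, Fin.sum_univ_succ] <;> ring

theorem bracket_self {A : Type*} [CommRing A] (x y z : Fin 3 → A)
    (h : det3 x y z = 0) :
    det3 x y (ofMat (-(toMat x * Jmat A * toMat z * Jmat A * toMat y))) = 0 ∧
      -(toMat x * Jmat A * (-(toMat x * Jmat A * toMat z * Jmat A * toMat y)) * Jmat A * toMat y)
        = ((toMat x).det * (toMat y).det) • toMat z := by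
  rw [prodW]
  simp [det3, Matrix.det_fin_three] at h
  constructor
  · simp [det3, ofMat, Matrix.det_fin_three]
    ring_nf
    ring_nf at h
    linear_combination (x 1 * y 1 - x 0 * y 2) * h
  · ext i j
    fin_cases i <;> fin_cases j <;>
      simp [toMat, Jmat, Matrix.det_fin_two, Matrix.mul_apply, Fin.sum_univ_succ] <;> ring
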